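/- Let d ≥ 1, let W be a symmetric positive definite d × d real matrix, let z ∈ ℝ^d, and let t > 0 satisfy zᵀW⁻¹z > t. Then the set {u ∈ S^{d−1} : (zᵀu)² ≥ t · uᵀWu} is homotopy equivalent to the two-point discrete space S⁰ (a pair of disjoint contractible caps). -/

import Mathlib

open Matrix
open scoped ContinuousMap

namespace HotellingAux

variable {d : ℕ}

noncomputable section

/-- linear functional -/
def L (z : Fin d → ℝ) (u : EuclideanSpace ℝ (Fin d)) : ℝ := ∑ i, z i * u i

/-- bilinear form of `W` -/
def B (W : Matrix (Fin d) (Fin d) ℝ) (x y : EuclideanSpace ℝ (Fin d)) : ℝ :=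
  ∑ i, ∑ j, x i * W i j * y j

lemma L_add (z : Fin d → ℝ) (x y : EuclideanSpace ℝ (Fin d)) :
    L z (x + y) = L z x + L z y := by
  simp [L, PiLp.add_apply, mul_add, Finset.sum_add_distrib]

lemma L_smul (z : Fin d → ℝ) (c : ℝ) (x : EuclideanSpace ℝ (Fin d)) :
    L z (c • x) = c * L z x := by
  simp only [L, PiLp.smul_apply, smul_eq_mul, Finset.mul_sum]
  exact Finset.sum_congr rfl fun i _ => by ring

lemma L_cont (z : Fin d → ℝ) : Continuous (L (d := d) z) := by
  unfold L
  exact continuous_finset_sum _ fun i _ =>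
    continuous_const.mul (EuclideanSpace.proj (𝕜 := ℝ) i).continuous

lemma ne_zero_of_L {z : Fin d → ℝ} {x : EuclideanSpace ℝ (Fin d)}
    (h : L z x ≠ 0) : x ≠ 0 := by
  rintro rfl; apply h; simp [L]

lemma B_add_add (W : Matrix (Fin d) (Fin d) ℝ) (x x' y y' : EuclideanSpace ℝ (Fin d)) :
    B W (x + x') (y + y') = B W x y + B W x y' + B W x' y + B W x' y' := by
  simp only [B, PiLp.add_apply, ← Finset.sum_add_distrib]
  refine Finset.sum_congr rfl fun i _ => ?_
  refine Finset.sum_congr rfl fun j _ => ?_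
  ring

lemma B_smul_left (W : Matrix (Fin d) (Fin d) ℝ) (c : ℝ) (x y : EuclideanSpace ℝ (Fin d)) :
    B W (c • x) y = c * B W x y := by
  simp only [B, PiLp.smul_apply, smul_eq_mul, Finset.mul_sum]
  refine Finset.sum_congr rfl fun i _ => Finset.sum_congr rfl fun j _ => by ring

lemma B_smul_right (W : Matrix (Fin d) (Fin d) ℝ) (c : ℝ) (x y : EuclideanSpace ℝ (Fin d)) :
    B W x (c • y) = c * B W x y := by
  simp only [B, PiLp.smul_apply, smul_eq_mul, Finset.mul_sum]
  refine Finset.sum_congr rfl fun i _ => Finset.sum_congr rfl fun j _ => by ring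

lemma B_symm {W : Matrix (Fin d) (Fin d) ℝ} (hW : W.IsHermitian)
    (x y : EuclideanSpace ℝ (Fin d)) : B W x y = B W y x := by
  unfold B
  rw [Finset.sum_comm]
  refine Finset.sum_congr rfl fun i _ => Finset.sum_congr rfl fun j _ => ?_
  have : W j i = W i j := by
    have := congrFun (congrFun hW i) j
    simpa [Matrix.conjTranspose_apply] using this
  rw [this]; ring

lemma B_self_pos {W : Matrix (Fin d) (Fin d) ℝ} (hW : W.PosDef)
    {x : EuclideanSpace ℝ (Fin d)} (hx : x ≠ 0) : 0 < B W x x := by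
  have h2 := hW.dotProduct_mulVec_pos (x := fun i => x i) (by
    intro h; apply hx; ext i; exact congrFun h i)
  have : B W x x = dotProduct (star fun i => x i) (W *ᵥ fun i => x i) := by
    simp [B, dotProduct, Matrix.mulVec, Finset.mul_sum, mul_assoc]
  rw [this]; exact h2

lemma B_self_nonneg {W : Matrix (Fin d) (Fin d) ℝ} (hW : W.PosDef)
    (x : EuclideanSpace ℝ (Fin d)) : 0 ≤ B W x x := by
  by_cases hx : x = 0
  · subst hx; simp [B]
  · exact (B_self_pos hW hx).le

lemma B_sq_le {W : Matrix (Fin d) (Fin d) ℝ} (hW : W.PosDef)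
    (x y : EuclideanSpace ℝ (Fin d)) : (B W x y) ^ 2 ≤ B W x x * B W y y := by
  have key : ∀ r : ℝ, 0 ≤ B W y y * (r * r) + (2 * B W x y) * r + B W x x := by
    intro r
    have h := B_self_nonneg hW (x + r • y)
    simp only [B_add_add, B_smul_left, B_smul_right, B_symm hW.1 y x] at h
    nlinarith [h]
  have hd := discrim_le_zero key
  rw [discrim] at hd
  nlinarith [hd]

lemma cone_smul (W : Matrix (Fin d) (Fin d) ℝ) (z : Fin d → ℝ) {t : ℝ} (c : ℝ)
    {x : EuclideanSpace ℝ (Fin d)} (hx : t * B W x x ≤ (L z x) ^ 2) :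
    t * B W (c • x) (c • x) ≤ (L z (c • x)) ^ 2 := by
  rw [B_smul_left, B_smul_right, L_smul]
  nlinarith [mul_le_mul_of_nonneg_left hx (sq_nonneg c)]

lemma cone_combo {W : Matrix (Fin d) (Fin d) ℝ} (hW : W.PosDef) (z : Fin d → ℝ)
    {t : ℝ} (ht : 0 < t) {x y : EuclideanSpace ℝ (Fin d)} {a b : ℝ}
    (ha : 0 ≤ a) (hb : 0 ≤ b)
    (hx : t * B W x x ≤ (L z x) ^ 2) (hy : t * B W y y ≤ (L z y) ^ 2)
    (hsign : 0 ≤ L z x * L z y) :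
    t * B W (a • x + b • y) (a • x + b • y) ≤ (L z (a • x + b • y)) ^ 2 := by
  have hcs := B_sq_le hW x y
  have hxx := B_self_nonneg hW x
  have hyy := B_self_nonneg hW y
  -- middle bound : t * B W x y ≤ L z x * L z y
  have h1 : (t * B W x y) ^ 2 ≤ (L z x * L z y) ^ 2 := by
    have h2 : (t * B W x y) ^ 2 ≤ (t * B W x x) * (t * B W y y) := by
      nlinarith [mul_le_mul_of_nonneg_left hcs (sq_nonneg t)]
    calc (t * B W x y) ^ 2 ≤ (t * B W x x) * (t * B W y y) := h2
      _ ≤ (L z x) ^ 2 * (L z y) ^ 2 := by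
          apply mul_le_mul hx hy (by positivity) (by positivity)
      _ = (L z x * L z y) ^ 2 := by ring
  have hmid : t * B W x y ≤ L z x * L z y := by
    have habs : |t * B W x y| ≤ |L z x * L z y| := by
      rw [← Real.sqrt_sq_eq_abs, ← Real.sqrt_sq_eq_abs]
      exact Real.sqrt_le_sqrt h1
    calc t * B W x y ≤ |t * B W x y| := le_abs_self _
      _ ≤ |L z x * L z y| := habs
      _ = L z x * L z y := abs_of_nonneg hsign
  simp only [L_add, L_smul, B_add_add, B_smul_left, B_smul_right]
  rw [B_symm hW.1 y x]
  nlinarith [mul_le_mul_of_nonneg_left hx (sq_nonneg a),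
    mul_le_mul_of_nonneg_left hy (sq_nonneg b),
    mul_le_mul_of_nonneg_left hmid (mul_nonneg ha hb)]

set_option maxHeartbeats 1000000 in
theorem main {d : ℕ} {W : Matrix (Fin d) (Fin d) ℝ} (hW : W.PosDef)
    (z : Fin d → ℝ) {t : ℝ} (ht : 0 < t) (hzt : t < z ⬝ᵥ W⁻¹ *ᵥ z) :
    Nonempty (({u : EuclideanSpace ℝ (Fin d) // ‖u‖ = 1 ∧
        t * B W u u ≤ (L z u) ^ 2}) ≃ₕ
      (Metric.sphere (0 : EuclideanSpace ℝ (Fin 1)) 1)) := by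
  classical
  -- the reference point
  have hdet : IsUnit W.det := hW.det_pos.ne'.isUnit
  set x0 : Fin d → ℝ := W⁻¹ *ᵥ z with hx0def
  set u0 : EuclideanSpace ℝ (Fin d) := (WithLp.equiv 2 (Fin d → ℝ)).symm x0 with hu0def
  have hu0i : ∀ i, u0 i = x0 i := fun i => rfl
  set c0 : ℝ := z ⬝ᵥ x0 with hc0def
  have htc0 : t < c0 := hzt
  have hc0pos : 0 < c0 := ht.trans htc0
  have hL0 : L z u0 = c0 := by
    simp [L, hc0def, dotProduct, hu0i]
  have hWx0 : W *ᵥ x0 = z := by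
    rw [hx0def, Matrix.mulVec_mulVec, Matrix.mul_nonsing_inv _ hdet, Matrix.one_mulVec]
  have hB0 : B W u0 u0 = c0 := by
    have h : B W u0 u0 = x0 ⬝ᵥ (W *ᵥ x0) := by
      simp [B, dotProduct, Matrix.mulVec, Finset.mul_sum, mul_assoc, hu0i]
    rw [h, hWx0, dotProduct_comm]
  have hcone0 : t * B W u0 u0 ≤ (L z u0) ^ 2 := by
    rw [hB0, hL0]; nlinarith
  have hu0ne : u0 ≠ 0 := ne_zero_of_L (by rw [hL0]; exact hc0pos.ne')
  have hnu0 : ‖u0‖ ≠ 0 := norm_ne_zero_iff.mpr hu0ne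
  set un : EuclideanSpace ℝ (Fin d) := ‖u0‖⁻¹ • u0 with hundef
  have hnun : ‖un‖ = 1 := by
    rw [hundef, norm_smul, Real.norm_eq_abs, abs_of_nonneg (inv_nonneg.mpr (norm_nonneg _)),
      inv_mul_cancel₀ hnu0]
  have hLun : 0 < L z un := by
    rw [hundef, L_smul, hL0]
    have : 0 < ‖u0‖⁻¹ := inv_pos.mpr ((norm_nonneg u0).lt_of_ne' hnu0)
    positivity
  have hconeun : t * B W un un ≤ (L z un) ^ 2 := cone_smul W z _ hcone0
  -- generic facts on the excursion set
  have hLne : ∀ u : {u : EuclideanSpace ℝ (Fin d) // ‖u‖ = 1 ∧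
      t * B W u u ≤ (L z u) ^ 2}, L z (u : EuclideanSpace ℝ (Fin d)) ≠ 0 := by
    intro u
    have hune : (u : EuclideanSpace ℝ (Fin d)) ≠ 0 := by
      intro h
      have := u.2.1
      rw [h] at this
      simp at this
    have hBpos : 0 < B W u u := B_self_pos hW hune
    have h2 : 0 < (L z (u : EuclideanSpace ℝ (Fin d))) ^ 2 :=
      lt_of_lt_of_le (by positivity) u.2.2
    intro h
    rw [h] at h2
    simp at h2
  -- the sign function
  set e : {u : EuclideanSpace ℝ (Fin d) // ‖u‖ = 1 ∧
      t * B W u u ≤ (L z u) ^ 2} → ℝ :=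
    fun u => L z (u : EuclideanSpace ℝ (Fin d)) / |L z (u : EuclideanSpace ℝ (Fin d))|
    with hedef
  have heabs : ∀ u, |e u| = 1 := by
    intro u
    rw [hedef]
    rw [abs_div, abs_abs, div_self (abs_ne_zero.mpr (hLne u))]
  have heL : ∀ u, e u * L z (u : EuclideanSpace ℝ (Fin d)) =
      |L z (u : EuclideanSpace ℝ (Fin d))| := by
    intro u
    rw [hedef]
    rw [div_mul_eq_mul_div, ← abs_mul_abs_self, mul_div_assoc,
      div_self (abs_ne_zero.mpr (hLne u)), mul_one]
  have hecont : Continuous e := by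
    rw [hedef]
    exact (((L_cont z).comp continuous_subtype_val).div
      (continuous_abs.comp ((L_cont z).comp continuous_subtype_val))
      (fun u => abs_ne_zero.mpr (hLne u)))
  -- the forward map
  have hfmem : ∀ u, (WithLp.equiv 2 (Fin 1 → ℝ)).symm (fun _ => e u) ∈
      Metric.sphere (0 : EuclideanSpace ℝ (Fin 1)) 1 := by
    intro u
    rw [mem_sphere_zero_iff_norm, EuclideanSpace.norm_eq]
    simp [Fin.sum_univ_one, WithLp.equiv_symm_apply, PiLp.toLp_apply, Real.norm_eq_abs, sq_abs,
      Real.sqrt_sq_eq_abs, heabs u]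
  set f : C({u : EuclideanSpace ℝ (Fin d) // ‖u‖ = 1 ∧
      t * B W u u ≤ (L z u) ^ 2}, Metric.sphere (0 : EuclideanSpace ℝ (Fin 1)) 1) :=
    ⟨fun u => ⟨(WithLp.equiv 2 (Fin 1 → ℝ)).symm (fun _ => e u), hfmem u⟩, by
      refine Continuous.subtype_mk ?_ _
      exact (PiLp.continuous_toLp 2 (fun _ : Fin 1 => ℝ)).comp
        (continuous_pi fun _ => hecont)⟩ with hfdef
  -- coordinate of a sphere point
  have hv0abs : ∀ v : Metric.sphere (0 : EuclideanSpace ℝ (Fin 1)) 1,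
      |(v : EuclideanSpace ℝ (Fin 1)) 0| = 1 := by
    intro v
    have hv := mem_sphere_zero_iff_norm.mp v.2
    rw [EuclideanSpace.norm_eq] at hv
    simpa [Fin.sum_univ_one, Real.norm_eq_abs, sq_abs, Real.sqrt_sq_eq_abs] using hv
  -- the backward map
  have hgmem : ∀ v : Metric.sphere (0 : EuclideanSpace ℝ (Fin 1)) 1,
      ‖((v : EuclideanSpace ℝ (Fin 1)) 0) • un‖ = 1 ∧
      t * B W (((v : EuclideanSpace ℝ (Fin 1)) 0) • un)
          (((v : EuclideanSpace ℝ (Fin 1)) 0) • un) ≤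
        (L z (((v : EuclideanSpace ℝ (Fin 1)) 0) • un)) ^ 2 := by
    intro v
    constructor
    · rw [norm_smul, Real.norm_eq_abs, hv0abs v, hnun, one_mul]
    · exact cone_smul W z _ hconeun
  set g : C(Metric.sphere (0 : EuclideanSpace ℝ (Fin 1)) 1,
      {u : EuclideanSpace ℝ (Fin d) // ‖u‖ = 1 ∧ t * B W u u ≤ (L z u) ^ 2}) :=
    ⟨fun v => ⟨((v : EuclideanSpace ℝ (Fin 1)) 0) • un, hgmem v⟩, by
      refine Continuous.subtype_mk ?_ _
      exact (((EuclideanSpace.proj (0 : Fin 1)).continuous).comp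
        continuous_subtype_val).smul continuous_const⟩ with hgdef
  -- f ∘ g = id
  have hfg : f.comp g = ContinuousMap.id _ := by
    ext v i
    obtain rfl : i = 0 := Subsingleton.elim i 0
    show (WithLp.equiv 2 (Fin 1 → ℝ)).symm (fun _ => e (g v)) 0 =
      (v : EuclideanSpace ℝ (Fin 1)) 0
    rw [WithLp.equiv_symm_apply, PiLp.toLp_apply]
    show L z (((v : EuclideanSpace ℝ (Fin 1)) 0) • un) /
      |L z (((v : EuclideanSpace ℝ (Fin 1)) 0) • un)| = _
    rw [L_smul, abs_mul, hv0abs v, one_mul, abs_of_pos hLun, mul_div_assoc,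
      div_self hLun.ne', mul_one]
  -- the homotopy from id to g ∘ f
  set vm : unitInterval × {u : EuclideanSpace ℝ (Fin d) // ‖u‖ = 1 ∧
      t * B W u u ≤ (L z u) ^ 2} → EuclideanSpace ℝ (Fin d) :=
    fun p => (1 - (p.1 : ℝ)) • (p.2 : EuclideanSpace ℝ (Fin d)) +
      (p.1 : ℝ) • (e p.2 • un) with hvmdef
  have hvmcone : ∀ p, t * B W (vm p) (vm p) ≤ (L z (vm p)) ^ 2 := by
    intro p
    rw [hvmdef]
    refine cone_combo hW z ht (by simp [sub_nonneg]; exact p.1.2.2) p.1.2.1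
      p.2.2.2 (cone_smul W z _ hconeun) ?_
    rw [L_smul]
    have h1 : L z (p.2 : EuclideanSpace ℝ (Fin d)) * (e p.2 * L z un) =
        (e p.2 * L z (p.2 : EuclideanSpace ℝ (Fin d))) * L z un := by ring
    rw [h1, heL]
    positivity
  have hvmL : ∀ p, 0 < e p.2 * L z (vm p) := by
    intro p
    rw [hvmdef]
    simp only [L_add, L_smul]
    have habs : 0 < |L z (p.2 : EuclideanSpace ℝ (Fin d))| := abs_pos.mpr (hLne p.2)
    have he2 : e p.2 * e p.2 = 1 := by
      have := heabs p.2
      nlinarith [abs_mul_abs_self (e p.2)]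
    have hs0 : (0:ℝ) ≤ (p.1 : ℝ) := p.1.2.1
    have hs1 : (p.1 : ℝ) ≤ 1 := p.1.2.2
    have expand : e p.2 * ((1 - (p.1 : ℝ)) * L z (p.2 : EuclideanSpace ℝ (Fin d)) +
        (p.1 : ℝ) * (e p.2 * L z un)) =
        (1 - (p.1 : ℝ)) * |L z (p.2 : EuclideanSpace ℝ (Fin d))| +
        (p.1 : ℝ) * L z un := by
      calc e p.2 * ((1 - (p.1 : ℝ)) * L z (p.2 : EuclideanSpace ℝ (Fin d)) +
          (p.1 : ℝ) * (e p.2 * L z un)) =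
          (1 - (p.1 : ℝ)) * (e p.2 * L z (p.2 : EuclideanSpace ℝ (Fin d))) +
          (p.1 : ℝ) * ((e p.2 * e p.2) * L z un) := by ring
        _ = _ := by rw [heL p.2, he2, one_mul]
    rw [expand]
    nlinarith [mul_nonneg (sub_nonneg.mpr hs1) (sub_nonneg.mpr (min_le_left
      |L z (p.2 : EuclideanSpace ℝ (Fin d))| (L z un))),
      mul_nonneg hs0 (sub_nonneg.mpr (min_le_right
      |L z (p.2 : EuclideanSpace ℝ (Fin d))| (L z un))),
      lt_min habs hLun]
  have hvmne : ∀ p, vm p ≠ 0 := by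
    intro p
    apply ne_zero_of_L (z := z)
    intro h
    have := hvmL p
    rw [h] at this
    simp at this
  have hvmnorm : ∀ p, ‖vm p‖ ≠ 0 := fun p => norm_ne_zero_iff.mpr (hvmne p)
  have hvmcont : Continuous vm := by
    rw [hvmdef]
    have hscont : Continuous fun p : unitInterval × {u : EuclideanSpace ℝ (Fin d) //
        ‖u‖ = 1 ∧ t * B W u u ≤ (L z u) ^ 2} => (p.1 : ℝ) :=
      continuous_subtype_val.comp continuous_fst
    exact ((continuous_const.sub hscont).smul
        (continuous_subtype_val.comp continuous_snd)).add
      (hscont.smul ((hecont.comp continuous_snd).smul continuous_const))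
  -- assemble the homotopy
  have Hmem : ∀ p, ‖‖vm p‖⁻¹ • vm p‖ = 1 ∧
      t * B W (‖vm p‖⁻¹ • vm p) (‖vm p‖⁻¹ • vm p) ≤ (L z (‖vm p‖⁻¹ • vm p)) ^ 2 := by
    intro p
    refine ⟨?_, cone_smul W z _ (hvmcone p)⟩
    rw [norm_smul, Real.norm_eq_abs, abs_of_nonneg (inv_nonneg.mpr (norm_nonneg _)),
      inv_mul_cancel₀ (hvmnorm p)]
  set H : ContinuousMap.Homotopy (ContinuousMap.id _) (g.comp f) :=
    { toFun := fun p => ⟨‖vm p‖⁻¹ • vm p, Hmem p⟩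
      continuous_toFun := by
        refine Continuous.subtype_mk ?_ _
        exact ((continuous_norm.comp hvmcont).inv₀ hvmnorm).smul hvmcont
      map_zero_left := by
        intro u
        refine Subtype.ext ?_
        show ‖vm (0, u)‖⁻¹ • vm (0, u) = (u : EuclideanSpace ℝ (Fin d))
        have hv : vm (0, u) = (u : EuclideanSpace ℝ (Fin d)) := by
          rw [hvmdef]; simp
        rw [hv, u.2.1]
        simp
      map_one_left := by
        intro u
        refine Subtype.ext ?_
        show ‖vm (1, u)‖⁻¹ • vm (1, u) = _
        have hv : vm (1, u) = e u • un := by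
          rw [hvmdef]; simp
        have hn : ‖e u • un‖ = 1 := by
          rw [norm_smul, Real.norm_eq_abs, heabs u, hnun, one_mul]
        rw [hv, hn]
        show (1:ℝ)⁻¹ • (e u • un) =
          (((f u : EuclideanSpace ℝ (Fin 1)) 0) • un)
        have hf0 : (f u : EuclideanSpace ℝ (Fin 1)) 0 = e u := rfl
        rw [hf0]
        simp }
  exact ⟨{ toFun := f, invFun := g, left_inv := ⟨H.symm⟩,
           right_inv := ⟨hfg ▸ ContinuousMap.Homotopy.refl _⟩ }⟩

end

end HotellingAux

/-- for `W` symmetric positive definite, `z ∈ ℝ^d` and `t > 0`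
with `zᵀW⁻¹z > t`, the set `{u ∈ S^{d-1} : (zᵀu)² ≥ t uᵀWu}` is homotopy
equivalent to the two-point discrete space `S⁰` (a pair of disjoint
contractible caps). -/
theorem hotelling_excursion_set_homotopyEquiv_S0
    (d : ℕ) (hd : 1 ≤ d) (W : Matrix (Fin d) (Fin d) ℝ) (hW : W.PosDef)
    (z : Fin d → ℝ) (t : ℝ) (ht : 0 < t) (hzt : t < z ⬝ᵥ W⁻¹.mulVec z) :
    Nonempty
      (({u : EuclideanSpace ℝ (Fin d) // ‖u‖ = 1 ∧
          t * (∑ i, ∑ j, u i * W i j * u j) ≤ (∑ i, z i * u i) ^ 2}) ≃ₕ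
        (Metric.sphere (0 : EuclideanSpace ℝ (Fin 1)) 1)) := by
  exact HotellingAux.main hW z ht hzt
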